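/- For every n ≥ 1, the cover graph G(L(Q_n)) of the face lattice of the n-dimensional hypercube has a Hamiltonian cycle. -/

import Mathlib

/-!
The cover graph of the face lattice of the hypercube `Q_n`.
Faces are encoded by ternary strings over `Fin 3`, with `0 ↦ '0'`, `1 ↦ '1'`, `2 ↦ '-'`;
the extra vertex `none` plays the role of the empty face `⊥`.
-/

/-- Base relation of the cover graph of `L(Q_n)`: two ternary strings are related if
they agree in all but exactly one position, where one of them has `-` (encoded `2`)
and the other has `0` or `1`; the empty face `none` is related to exactly the strings
containing no `-`. -/
def cubeFaceRel (n : ℕ) (u v : Option (Fin n → Fin 3)) : Prop :=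
  match u, v with
  | some x, some y =>
      ∃ i : Fin n, x i ≠ y i ∧ (x i = 2 ∨ y i = 2) ∧ ∀ j : Fin n, j ≠ i → x j = y j
  | none, some y => ∀ i : Fin n, y i ≠ 2
  | _, _ => False

/-- The cover graph `G(L(Q_n))` of the face lattice of the hypercube. -/
def cubeFaceGraph (n : ℕ) : SimpleGraph (Option (Fin n → Fin 3)) :=
  SimpleGraph.fromRel (cubeFaceRel n)

namespace CubeHam

/-- Adjacency in the grid graph `P₃^n` on ternary strings. -/
def gridRel (n : ℕ) (x y : Fin n → Fin 3) : Prop :=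
  ∃ i : Fin n, x i ≠ y i ∧ (x i = 2 ∨ y i = 2) ∧ ∀ j : Fin n, j ≠ i → x j = y j

lemma gridRel.symm {n : ℕ} {x y : Fin n → Fin 3} (h : gridRel n x y) : gridRel n y x := by
  obtain ⟨i, h1, h2, h3⟩ := h
  exact ⟨i, h1.symm, h2.symm, fun j hj => (h3 j hj).symm⟩

lemma gridRel.cons {n : ℕ} (a : Fin 3) {x y : Fin n → Fin 3} (h : gridRel n x y) :
    gridRel (n + 1) (Fin.cons a x) (Fin.cons a y) := by
  obtain ⟨i, h1, h2, h3⟩ := h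
  refine ⟨i.succ, by simpa using h1, by simpa using h2, ?_⟩
  intro j hj
  rcases Fin.eq_zero_or_eq_succ j with rfl | ⟨k, rfl⟩
  · simp
  · simp only [Fin.cons_succ]
    exact h3 k (fun hk => hj (by rw [hk]))

lemma gridRel_cons_cons {n : ℕ} {a b : Fin 3} (hab : a ≠ b) (h2 : a = 2 ∨ b = 2)
    (x : Fin n → Fin 3) : gridRel (n + 1) (Fin.cons a x) (Fin.cons b x) := by
  refine ⟨0, by simpa using hab, by simpa using h2, ?_⟩
  intro j hj
  obtain ⟨k, rfl⟩ := Fin.eq_succ_of_ne_zero hj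
  simp

/-- The snake Hamiltonian path through `{0,1,2}^n`, from the all-`0` to the all-`1` string. -/
def L : (n : ℕ) → List (Fin n → Fin 3)
  | 0 => [fun i => i.elim0]
  | n + 1 =>
      ((L n).map (fun x => Fin.cons 0 x)) ++ ((L n).reverse.map (fun x => Fin.cons 2 x)) ++
        ((L n).map (fun x => Fin.cons 1 x))

lemma L_ne_nil (n : ℕ) : L n ≠ [] := by
  cases n with
  | zero => simp [L]
  | succ n =>
    simp only [L, ne_eq, List.append_eq_nil_iff, List.map_eq_nil_iff]
    intro h
    exact L_ne_nil n h.1.1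

lemma mem_L (n : ℕ) (x : Fin n → Fin 3) : x ∈ L n := by
  induction n with
  | zero =>
    simp only [L, List.mem_singleton]
    funext i; exact i.elim0
  | succ n ih =>
    have hx : Fin.cons (x 0) (Fin.tail x) = x := Fin.cons_self_tail x
    have htl := ih (Fin.tail x)
    have h3 : x 0 = 0 ∨ x 0 = 1 ∨ x 0 = 2 := by
      have : ∀ a : Fin 3, a = 0 ∨ a = 1 ∨ a = 2 := by decide
      exact this _
    simp only [L, List.mem_append, List.mem_map, List.mem_reverse]
    rcases h3 with h | h | h
    · exact Or.inl (Or.inl ⟨Fin.tail x, htl, by rw [← h, hx]⟩)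
    · exact Or.inr ⟨Fin.tail x, htl, by rw [← h, hx]⟩
    · exact Or.inl (Or.inr ⟨Fin.tail x, htl, by rw [← h, hx]⟩)

lemma head_of_mem_map_cons {n : ℕ} {a : Fin 3} {l : List (Fin n → Fin 3)}
    {y : Fin (n + 1) → Fin 3} (h : y ∈ l.map (fun x => Fin.cons a x)) : y 0 = a := by
  simp only [List.mem_map] at h
  obtain ⟨x, -, rfl⟩ := h
  simp

lemma cons_injective {n : ℕ} (a : Fin 3) :
    Function.Injective (fun x : Fin n → Fin 3 => (Fin.cons a x : Fin (n + 1) → Fin 3)) := by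
  intro x y h
  have := congrArg Fin.tail h
  simpa [Fin.tail_cons] using this

lemma L_nodup (n : ℕ) : (L n).Nodup := by
  induction n with
  | zero => simp [L]
  | succ n ih =>
    simp only [L, List.nodup_append]
    refine ⟨⟨ih.map (cons_injective 0), (List.nodup_reverse.2 ih).map (cons_injective 2), ?_⟩,
      ih.map (cons_injective 1), ?_⟩
    · intro y hy y' hy' hyy; subst hyy
      have h0 := head_of_mem_map_cons hy
      have h2 := head_of_mem_map_cons hy'
      rw [h0] at h2; exact absurd h2 (by decide)
    · intro y hy y' hy' hyy; subst hyy
      have h1 := head_of_mem_map_cons hy'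
      rcases List.mem_append.1 hy with h | h
      · have h0 := head_of_mem_map_cons h
        rw [h0] at h1; exact absurd h1 (by decide)
      · have h2 := head_of_mem_map_cons h
        rw [h2] at h1; exact absurd h1 (by decide)

lemma L_head? (n : ℕ) : (L n).head? = some (fun _ => 0) := by
  induction n with
  | zero =>
    simp only [L, List.head?_cons, Option.some.injEq]
    funext i; exact i.elim0
  | succ n ih =>
    have hne : (L n).map (fun x => (Fin.cons 0 x : Fin (n + 1) → Fin 3)) ≠ [] := by
      simp [List.map_eq_nil_iff, L_ne_nil n]
    simp only [L, List.append_assoc]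
    rw [List.head?_append_of_ne_nil _ hne, List.head?_map, ih]
    simp only [Option.map_some, Option.some.injEq]
    funext i
    refine Fin.cases ?_ (fun k => ?_) i <;> simp

lemma L_getLast? (n : ℕ) : (L n).getLast? = some (fun _ => 1) := by
  induction n with
  | zero =>
    simp only [L, List.getLast?_singleton, Option.some.injEq]
    funext i; exact i.elim0
  | succ n ih =>
    have hne : (L n).map (fun x => (Fin.cons 1 x : Fin (n + 1) → Fin 3)) ≠ [] := by
      simp [List.map_eq_nil_iff, L_ne_nil n]
    simp only [L]
    rw [List.getLast?_append_of_ne_nil _ hne, List.getLast?_map, ih]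
    simp only [Option.map_some, Option.some.injEq]
    funext i
    refine Fin.cases ?_ (fun k => ?_) i <;> simp

lemma L_chain' (n : ℕ) : List.Chain' (gridRel n) (L n) := by
  induction n with
  | zero => exact List.isChain_singleton _
  | succ n ih =>
    have hmap : ∀ a : Fin 3, List.Chain' (gridRel (n + 1)) ((L n).map (fun x => Fin.cons a x)) :=
      fun a => (List.isChain_map _).2 (ih.imp (fun _ _ h => h.cons a))
    have hrev : List.Chain' (gridRel (n + 1)) ((L n).reverse.map (fun x => Fin.cons 2 x)) := by
      refine (List.isChain_map _).2 (List.isChain_reverse.2 ?_)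
      exact ih.imp (fun _ _ h => (h.cons 2).symm)
    simp only [L, List.append_assoc]
    refine List.isChain_append.2 ⟨hmap 0, List.isChain_append.2 ⟨hrev, hmap 1, ?_⟩, ?_⟩
    · -- junction between the reversed middle block and the last block
      intro x hx y hy
      rw [List.getLast?_map, List.getLast?_reverse, L_head? n] at hx
      rw [List.head?_map, L_head? n] at hy
      simp only [Option.map_some, Option.mem_def, Option.some.injEq] at hx hy
      subst hx; subst hy
      exact gridRel_cons_cons (by decide) (by decide) _
    · -- junction between the first block and the middle block
      intro x hx y hy
      rw [List.getLast?_map, L_getLast? n] at hx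
      rw [List.head?_append_of_ne_nil _ (by simp [List.map_eq_nil_iff, L_ne_nil n]),
        List.head?_map, List.head?_reverse, L_getLast? n] at hy
      simp only [Option.map_some, Option.mem_def, Option.some.injEq] at hx hy
      subst hx; subst hy
      exact gridRel_cons_cons (by decide) (by decide) _

/-- Build a walk from a chain of adjacent vertices. -/
def mkWalk {V : Type*} (G : SimpleGraph V) :
    (u w : V) → (l : List V) → List.Chain G.Adj u (l ++ [w]) → G.Walk u w
  | _, _, [], h => SimpleGraph.Walk.cons (List.chain_cons.1 h).1 SimpleGraph.Walk.nil
  | u, w, a :: l, h =>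
      SimpleGraph.Walk.cons (List.chain_cons.1 h).1 (mkWalk G a w l (List.chain_cons.1 h).2)

lemma mkWalk_support {V : Type*} (G : SimpleGraph V) :
    ∀ (u w : V) (l : List V) (h : List.Chain G.Adj u (l ++ [w])),
      (mkWalk G u w l h).support = u :: (l ++ [w])
  | _, _, [], _ => rfl
  | u, w, a :: l, h => by
    simp [mkWalk, mkWalk_support G a w l]
    exact mkWalk_support G a w l _

lemma mkWalk_edges {V : Type*} (G : SimpleGraph V) :
    ∀ (u w : V) (l : List V) (h : List.Chain G.Adj u (l ++ [w])),
      (mkWalk G u w l h).edges = List.zipWith (fun a b => s(a, b)) (u :: l) (l ++ [w])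
  | _, _, [], _ => rfl
  | u, w, a :: l, h => by
    simp [mkWalk, mkWalk_edges G a w l]
    exact mkWalk_edges G a w l _

/-- If `none` does not occur in `m`, and the consecutive-pairs list of `m ++ [none]`
contains the edge `{none, some v}`, then the last entry of `m` is `some v`. -/
lemma last_of_none_edge {A : Type*} (v : A) :
    ∀ (m : List (Option A)), none ∉ m →
      s(none, some v) ∈ List.zipWith (fun a b => s(a, b)) m (m.tail ++ [none]) →
      m.getLast? = some (some v)
  | [], _, h => by simp at h
  | [a], ha, h => by
    simp only [List.tail_cons, List.nil_append, List.zipWith_cons_cons, List.zipWith_nil_right,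
      List.mem_singleton] at h
    rw [Sym2.eq_iff] at h
    rcases h with ⟨h1, h2⟩ | ⟨h1, h2⟩
    · exact absurd h2 (by simp)
    · simp [← h2]
  | a :: b :: m, ha, h => by
    have hbm : (none : Option A) ∉ b :: m := fun hc => ha (List.mem_cons_of_mem a hc)
    simp only [List.tail_cons, List.cons_append, List.zipWith_cons_cons, List.mem_cons] at h
    rcases h with h | h
    · rw [Sym2.eq_iff] at h
      rcases h with ⟨h1, h2⟩ | ⟨h1, h2⟩
      · exact absurd h1.symm (fun hc => ha (by simp [← hc]))
      · exact absurd h1.symm (fun hc => hbm (by simp [← hc]))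
    · have := last_of_none_edge v (b :: m) hbm (by simpa using h)
      simpa using this

lemma adj_of_grid {n : ℕ} {x y : Fin n → Fin 3} (h : gridRel n x y) :
    (cubeFaceGraph n).Adj (some x) (some y) := by
  obtain ⟨i, h1, -, -⟩ := h.symm.symm
  refine (SimpleGraph.fromRel_adj _ _ _).2 ⟨?_, Or.inl h⟩
  simp only [ne_eq, Option.some.injEq]
  intro hc; exact h1 (by rw [hc])

lemma adj_none_zero (n : ℕ) :
    (cubeFaceGraph n).Adj none (some fun _ => 0) := by
  refine (SimpleGraph.fromRel_adj _ _ _).2 ⟨by simp, Or.inl ?_⟩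
  show ∀ i : Fin n, (fun _ => (0 : Fin 3)) i ≠ 2
  intro i
  show (0 : Fin 3) ≠ 2
  decide

lemma adj_one_none (n : ℕ) :
    (cubeFaceGraph n).Adj (some fun _ => 1) none := by
  refine (SimpleGraph.fromRel_adj _ _ _).2 ⟨by simp, Or.inr ?_⟩
  show ∀ i : Fin n, (fun _ => (1 : Fin 3)) i ≠ 2
  intro i
  show (1 : Fin 3) ≠ 2
  decide

theorem main (n : ℕ) (hn : 1 ≤ n) :
    ∃ (v : Option (Fin n → Fin 3)) (c : (cubeFaceGraph n).Walk v v),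
      c.IsHamiltonianCycle := by
  -- destructure L n
  obtain ⟨t, hL⟩ : ∃ t, L n = (fun _ => 0) :: t := by
    obtain ⟨a, t, hat⟩ : ∃ a t, L n = a :: t := by
      cases hq : L n with
      | nil => exact absurd hq (L_ne_nil n)
      | cons a t => exact ⟨a, t, rfl⟩
    have hh := L_head? n
    rw [hat] at hh
    simp only [List.head?_cons, Option.some.injEq] at hh
    exact ⟨t, by rw [hat, hh]⟩
  -- the chain for the path part
  have hchain : List.Chain ((cubeFaceGraph n).Adj) (some fun _ => 0) ((t.map some) ++ [none]) := by
    have h1 : List.Chain' ((cubeFaceGraph n).Adj) ((L n).map some ++ [none]) := by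
      refine List.isChain_append.2 ⟨?_, by simp, ?_⟩
      · exact (List.isChain_map _).2 ((L_chain' n).imp (fun _ _ h => adj_of_grid h))
      · intro x hx y hy
        rw [List.getLast?_map, L_getLast? n] at hx
        simp only [Option.map_some, Option.mem_def, Option.some.injEq] at hx
        simp only [List.head?_cons, Option.mem_def, Option.some.injEq] at hy
        subst hx; subst hy
        exact adj_one_none n
    have h2 : ((L n).map some ++ [none] : List (Option (Fin n → Fin 3)))
        = (some fun _ => 0) :: ((t.map some) ++ [none]) := by
      rw [hL]; simp
    rw [h2] at h1
    exact h1
  set p : (cubeFaceGraph n).Walk (some fun _ => 0) none :=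
    mkWalk (cubeFaceGraph n) (some fun _ => 0) none (t.map some) hchain with hp
  have hsupp : p.support = (L n).map some ++ [none] := by
    rw [hp, mkWalk_support, hL]; simp
  have hnone : (none : Option (Fin n → Fin 3)) ∉ (L n).map some := by
    simp only [List.mem_map]
    rintro ⟨y, -, hy⟩
    exact Option.some_ne_none y hy
  refine ⟨none, SimpleGraph.Walk.cons (adj_none_zero n) p, ?_⟩
  rw [SimpleGraph.Walk.isHamiltonianCycle_iff_isCycle_and_support_count_tail_eq_one]
  constructor
  · -- IsCycle
    rw [SimpleGraph.Walk.cons_isCycle_iff]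
    constructor
    · -- IsPath
      refine SimpleGraph.Walk.IsPath.mk' ?_
      rw [hsupp]
      refine List.Nodup.append ((L_nodup n).map (Option.some_injective _)) (by simp) ?_
      intro x hx hx'
      simp only [List.mem_singleton] at hx'
      subst hx'
      exact hnone hx
    · -- the closing edge is not among the path edges
      intro hmem
      rw [hp, mkWalk_edges] at hmem
      have hzip : s(none, some fun _ => (0 : Fin 3)) ∈
          List.zipWith (fun a b => s(a, b)) ((L n).map some) (((L n).map some).tail ++ [none]) := by
        have h1 : ((some fun _ => (0:Fin 3)) :: t.map some) = (L n).map some := by rw [hL]; simp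
        have h2 : (t.map some) ++ [none]
            = (((L n).map some).tail ++ [none] : List (Option (Fin n → Fin 3))) := by
          rw [hL]; simp
        rw [h2, h1] at hmem
        exact hmem
      have hlast := last_of_none_edge _ ((L n).map some) hnone hzip
      rw [List.getLast?_map, L_getLast? n] at hlast
      simp only [Option.map_some, Option.some.injEq] at hlast
      have h10 := congrFun hlast ⟨0, hn⟩
      exact absurd h10 (by decide)
  · -- Hamiltonian: every vertex appears exactly once in the cycle's tail support
    intro a
    rw [SimpleGraph.Walk.support_cons, List.tail_cons, hsupp]
    refine @List.count_eq_one_of_mem _ instBEqOfDecidableEq _ _ _ ?_ ?_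
    · refine List.Nodup.append ((L_nodup n).map (Option.some_injective _)) (by simp) ?_
      intro x hx hx'
      simp only [List.mem_singleton] at hx'
      subst hx'
      exact hnone hx
    · cases a with
      | none => simp
      | some x =>
        refine List.mem_append.2 (Or.inl ?_)
        exact List.mem_map.2 ⟨x, mem_L n x, rfl⟩

end CubeHam

/-- For every `n ≥ 1`, the cover graph of the face lattice of the `n`-cube has a
Hamiltonian cycle. -/
theorem cubeFaceGraph_hamiltonian_cycle (n : ℕ) (hn : 1 ≤ n) :
    ∃ (v : Option (Fin n → Fin 3)) (c : (cubeFaceGraph n).Walk v v),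
      c.IsHamiltonianCycle := by
  exact CubeHam.main n hn
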